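/- For any two formal pseudodifferential operators D₁, D₂ (with coefficients formal power series in x), the identity res_k ((e^{−kx} D₁)(D₂ e^{kx})) dk = res_∂ (D₂ D₁) holds, where the left side is the coefficient of k^{−1} of the product of the two formal Laurent series in k obtained by the right action of D₁ on e^{−kx} and the left action of D₂ on e^{kx}, and the right side is the ∂_x^{−1}-coefficient of D₂D₁. -/

import Mathlib

/-!
STATEMENT 8: For any two formal pseudodifferential operators D₁, D₂,
res_k ((e^{−kx} D₁)(D₂ e^{kx})) dk = res_∂ (D₂ D₁).

Pseudodifferential operators `(N, c)` represent `Σ c s ∂^{N-s}` with formal power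
series coefficients in x.  The left action gives `D₂ e^{kx} = e^{kx} Σ_n a_n(x) kⁿ`
(a formal Laurent series in k, bounded above, represented by the same kind of pair),
and the right (formal adjoint, `f∂ = −∂f`) action gives
`e^{−kx} D₁ = e^{−kx} Σ_m (Σ_j (−1)^j gbin(m+j,j) a_{m+j}^{(j)}(x)) k^m`.
`res_k (·) dk` is the coefficient of `k^{−1}` and `res_∂` the coefficient of `∂^{−1}`.
-/

noncomputable section

def PsDO : Type := ℤ × (ℕ → PowerSeries ℂ)

namespace PsDO

def gbin (n : ℤ) (j : ℕ) : ℂ :=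
  (∏ i ∈ Finset.range j, ((n : ℂ) - (i : ℂ))) / (j.factorial : ℂ)

def coeffAt (A : PsDO) (n : ℤ) : PowerSeries ℂ :=
  if n ≤ A.1 then A.2 (A.1 - n).toNat else 0

def mul (A B : PsDO) : PsDO :=
  (A.1 + B.1, fun t => ∑ s ∈ Finset.range (t + 1), ∑ j ∈ Finset.range (t + 1 - s),
    A.2 s * PowerSeries.C (gbin (A.1 - s) j) *
      (PowerSeries.derivativeFun)^[j] (B.2 (t - s - j)))

/-- The symbol of the right (formal adjoint) action: `e^{−kx} D = e^{−kx}·(rightSym D)(x,k)`.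
The coefficient of `k^{N−t}` is `Σ_{s+j=t} (−1)^j gbin(N−s,j) (c s)^{(j)}`. -/
def rightSym (A : PsDO) : PsDO :=
  (A.1, fun t => ∑ j ∈ Finset.range (t + 1),
    PowerSeries.C ((-1 : ℂ) ^ j * gbin (A.1 - (t - j)) j) *
      (PowerSeries.derivativeFun)^[j] (A.2 (t - j)))

/-- Product of formal Laurent series in k (bounded above) with power series coefficients. -/
def smul (A B : PsDO) : PsDO :=
  (A.1 + B.1, fun t => ∑ s ∈ Finset.range (t + 1), A.2 s * B.2 (t - s))

end PsDO

open PsDO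

/-- Here `D₁ = A`, `D₂ = B`; `B` itself is the symbol of `D₂ e^{kx}`. -/
lemma gbin_reflect (m : ℤ) (j : ℕ) :
    (-1 : ℂ) ^ j * gbin m j = gbin ((j : ℤ) - 1 - m) j := by
  unfold gbin
  rw [mul_div_assoc']
  congr 1
  rw [← Finset.prod_range_reflect (fun i => ((((j : ℤ) - 1 - m : ℤ) : ℂ) - (i : ℕ)))]
  have : ∀ i ∈ Finset.range j,
      ((((j : ℤ) - 1 - m : ℤ) : ℂ) - ((j - 1 - i : ℕ) : ℂ)) = -1 * (((m : ℂ)) - i) := by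
    intro i hi
    have hij : i < j := Finset.mem_range.mp hi
    have h1 : ((j - 1 - i : ℕ) : ℤ) = (j : ℤ) - 1 - i := by omega
    have h2 : ((j - 1 - i : ℕ) : ℂ) = (j : ℂ) - 1 - i := by
      exact_mod_cast congrArg (fun z : ℤ => (z : ℂ)) h1
    rw [h2]
    push_cast
    ring
  rw [Finset.prod_congr rfl this, Finset.prod_mul_distrib, Finset.prod_const]
  simp

theorem stmt8 (A B : PsDO) :
    coeffAt (smul (rightSym A) B) (-1) = coeffAt (mul B A) (-1) := by
  obtain ⟨M, a⟩ := A
  obtain ⟨N, b⟩ := B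
  unfold coeffAt smul mul rightSym
  simp only
  rw [add_comm N M]
  split_ifs with h
  · set t := (M + N - (-1)).toNat with ht
    have hts : (t : ℤ) = M + N + 1 := by rw [ht]; omega
    -- reflect RHS outer sum
    rw [← Finset.sum_range_reflect (fun s => ∑ j ∈ Finset.range (t + 1 - s),
      b s * PowerSeries.C (gbin (N - s) j) *
        (PowerSeries.derivativeFun)^[j] (a (t - s - j)))]
    refine Finset.sum_congr rfl ?_
    intro s hs
    have hst : s ≤ t := by
      have := Finset.mem_range.mp hs; omega
    simp only [Nat.add_sub_cancel]
    have h1 : t + 1 - (t - s) = s + 1 := by omega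
    have h2 : t - (t - s) = s := by omega
    simp only [h1, h2]
    rw [Finset.sum_mul]
    refine Finset.sum_congr rfl ?_
    intro j hj
    have hjs : j ≤ s := by have := Finset.mem_range.mp hj; omega
    have c1 : ((t - s : ℕ) : ℤ) = (t : ℤ) - s := by omega
    have c2 : ((s - j : ℕ) : ℤ) = (s : ℤ) - j := by omega
    have harg : N - ((t - s : ℕ) : ℤ) = (j : ℤ) - 1 - (M - ((s : ℤ) - (j : ℤ))) := by
      rw [c1]; omega
    rw [gbin_reflect, ← harg]
    ring
  · rfl
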